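/- For every even n ≥ 2, the word S̄_n obtained from the recursion of Definition 4.3(iv) satisfies: for each 1 ≤ i < j ≤ n with j − i ≥ 2, the projection S̄_n[x_i, x_j] equals x_i x_j x_i x_j. -/

import Mathlib

/-- The two linear parts of the double-linear word `S̄ n` of Definition 4.3(iv):
`S̄ 1 = x₁²`; if `k` is odd and `S̄ k = (s' · xₖ)(s · xₖ x_{k-1})` then
`S̄ (k+1) = (s' · x_{k+1} xₖ)(s · xₖ x_{k-1} · x_{k+1})`; if `k` is even and
`S̄ k = (s · xₖ x_{k-1})(s' · xₖ)` then
`S̄ (k+1) = (s · xₖ x_{k-1} · x_{k+1})(s' · x_{k+1} · xₖ)`. -/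
def sbarPair : ℕ → List ℕ × List ℕ
  | 0 => ([], [])
  | 1 => ([1], [1])
  | (k+2) =>
    let p := sbarPair (k+1)
    if (k+1) % 2 = 1 then (p.1.dropLast ++ [k+2, k+1], p.2 ++ [k+2])
    else (p.1 ++ [k+2], p.2.dropLast ++ [k+2, k+1])

/-- The word `S̄ n`, e.g. `S̄ 8 = (x₂x₁x₄x₃x₆x₅x₈x₇)(x₁x₃x₂x₅x₄x₇x₆x₈)`. -/
def sbarW (n : ℕ) : List ℕ := (sbarPair n).1 ++ (sbarPair n).2

/-- Projection of a word to the two variables `i`, `j` (deleting all other letters). -/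
def proj2 (u : List ℕ) (i j : ℕ) : List ℕ := u.filter (fun a => a == i || a == j)

lemma filter_or_of_not_mem (l : List ℕ) (i j : ℕ) (h : ∀ a ∈ l, a ≠ j) :
    l.filter (fun a => a == i || a == j) = l.filter (fun a => a == i) := by
  apply List.filter_congr
  intro a ha
  have : (a == j) = false := beq_eq_false_iff_ne.mpr (h a ha)
  simp [this]

def Qprop (n : ℕ) : Prop :=
  (sbarPair n).2 = (sbarPair n).2.dropLast ++ [n]
  ∧ (∀ a ∈ (sbarPair n).1, 1 ≤ a ∧ a ≤ n)
  ∧ (∀ a ∈ (sbarPair n).2, 1 ≤ a ∧ a ≤ n)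
  ∧ (∀ i, 1 ≤ i → i ≤ n → (sbarPair n).1.filter (fun a => a == i) = [i])
  ∧ (∀ i, 1 ≤ i → i ≤ n → (sbarPair n).2.filter (fun a => a == i) = [i])
  ∧ (∀ i j, 1 ≤ i → i < j → j ≤ n → 2 ≤ j - i → proj2 (sbarW n) i j = [i, j, i, j])

lemma qkey : ∀ m, Qprop (2*m+2) := by
  intro m
  induction m with
  | zero =>
    refine ⟨by decide, by decide, by decide, ?_, ?_, ?_⟩
    · intro i h1 h2; interval_cases i <;> decide
    · intro i h1 h2; interval_cases i <;> decide
    · intro i j h1 h2 h3 h4; omega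
  | succ m ih =>
    obtain ⟨hB, hA1, hB1, hfA, hfB, hmain⟩ := ih
    set n := 2*m+2 with hn
    set A := (sbarPair n).1 with hA
    set Bd := (sbarPair n).2.dropLast with hBd
    have e1 : sbarPair (n+1) = (A ++ [n+1], Bd ++ [n+1, n]) := by
      show sbarPair (2*m+1+2) = _
      rw [sbarPair]
      have h2 : (2*m+1+1) % 2 = 0 := by omega
      simp [h2, hA, hBd, hn]
    have e2 : sbarPair (n+2) = (A ++ [n+2, n+1], Bd ++ [n+1, n, n+2]) := by
      show sbarPair (2*m+2+2) = _
      rw [sbarPair]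
      have h2 : (2*m+2+1) % 2 = 1 := by omega
      rw [show 2*m+2+1 = n+1 from rfl, e1]
      simp [h2, hn]
    have hn2 : 2*(m+1)+2 = n+2 := by omega
    rw [Qprop, hn2, e2]
    -- membership bounds
    have hBd_sub : ∀ a ∈ Bd, 1 ≤ a ∧ a ≤ n := fun a ha => hB1 a (List.dropLast_subset _ ha)
    -- single-variable filters on Bd
    have hfBd : ∀ i, 1 ≤ i → i ≤ n - 1 → Bd.filter (fun a => a == i) = [i] := by
      intro i h1 h2
      have := hfB i h1 (by omega)
      rw [hB, List.filter_append] at this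
      have hne : ((n : ℕ) == i) = false := beq_eq_false_iff_ne.mpr (by omega)
      simpa [List.filter, hne] using this
    have hfBdn : Bd.filter (fun a => a == n) = [] := by
      have := hfB n (by omega) (by omega)
      rw [hB, List.filter_append] at this
      simp [List.filter] at this
      have h2 : Bd.filter (fun a => a == n) ++ [n] = [] ++ [n] := by simpa using this
      exact List.append_cancel_right h2
    have hfBd_gt : ∀ i, n < i → Bd.filter (fun a => a == i) = [] := by
      intro i hi
      rw [List.filter_eq_nil_iff]
      intro a ha
      have := (hBd_sub a ha).2
      simp; omega
    have hfA_gt : ∀ i, n < i → A.filter (fun a => a == i) = [] := by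
      intro i hi
      rw [List.filter_eq_nil_iff]
      intro a ha
      have := (hA1 a ha).2
      simp; omega
    refine ⟨?_, ?_, ?_, ?_, ?_, ?_⟩
    · rw [show Bd ++ [n+1, n, n+2] = (Bd ++ [n+1, n]) ++ [n+2] by simp, List.dropLast_concat]
    · intro a ha
      simp at ha
      rcases ha with ha | ha | ha
      · have := hA1 a ha; omega
      · omega
      · omega
    · intro a ha
      simp at ha
      rcases ha with ha | ha | ha | ha
      · have := hBd_sub a ha; omega
      · omega
      · omega
      · omega
    · intro i h1 h2
      rw [List.filter_append]
      rcases Nat.lt_or_ge i (n+1) with h | h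
      · have e1 : ((n+2 : ℕ) == i) = false := beq_eq_false_iff_ne.mpr (by omega)
        have e2 : ((n+1 : ℕ) == i) = false := beq_eq_false_iff_ne.mpr (by omega)
        rw [hfA i h1 (by omega)]
        simp [List.filter, e1, e2]
      · have hAi : A.filter (fun a => a == i) = [] := hfA_gt i (by omega)
        rw [hAi]
        have : i = n+1 ∨ i = n+2 := by omega
        rcases this with rfl | rfl
        · have e1 : ((n+2 : ℕ) == n+1) = false := by simp
          simp [List.filter, e1]
        · have e1 : ((n+1 : ℕ) == n+2) = false := by simp
          simp [List.filter, e1]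
    · intro i h1 h2
      rw [List.filter_append]
      rcases Nat.lt_or_ge i n with h | h
      · have e1 : ((n+1 : ℕ) == i) = false := beq_eq_false_iff_ne.mpr (by omega)
        have e2 : ((n : ℕ) == i) = false := beq_eq_false_iff_ne.mpr (by omega)
        have e3 : ((n+2 : ℕ) == i) = false := beq_eq_false_iff_ne.mpr (by omega)
        rw [hfBd i h1 (by omega)]
        simp [List.filter, e1, e2, e3]
      · rcases Nat.eq_or_lt_of_le h with h' | h'
        · have hi : i = n := h'.symm
          subst hi
          rw [hfBdn]
          have e1 : ((n+1 : ℕ) == n) = false := by simp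
          have e3 : ((n+2 : ℕ) == n) = false := by simp
          simp [List.filter, e1, e3]
        · rw [hfBd_gt i h']
          have : i = n+1 ∨ i = n+2 := by omega
          rcases this with rfl | rfl
          · have e1 : ((n : ℕ) == n+1) = false := by simp
            have e2 : ((n+2 : ℕ) == n+1) = false := by simp
            simp [List.filter, e1, e2]
          · have e1 : ((n : ℕ) == n+2) = false := by simp
            have e2 : ((n+1 : ℕ) == n+2) = false := by simp
            simp [List.filter, e1, e2]
    · intro i j h1 h2 h3 h4
      rw [sbarW, e2, proj2]
      simp only [List.cons_append, List.filter_append]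
      set p : ℕ → Bool := fun a => a == i || a == j with hp
      rcases Nat.lt_or_ge j (n+1) with hj | hj
      · -- j ≤ n : use induction hypothesis
        have hmain' := hmain i j h1 h2 (by omega) h4
        rw [sbarW, proj2, List.filter_append, hB, List.filter_append] at hmain'
        have e1 : p (n+2) = false := by simp [hp]; omega
        have e2 : p (n+1) = false := by simp [hp]; omega
        simp only [List.filter, e1, e2, List.filter_nil] at *
        simpa using hmain'
      · have hjA : ∀ a ∈ A, a ≠ j := fun a ha => by have := (hA1 a ha).2; omega
        have hjB : ∀ a ∈ Bd, a ≠ j := fun a ha => by have := (hBd_sub a ha).2; omega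
        have hAf : A.filter p = [i] := by
          rw [hp, filter_or_of_not_mem A i j hjA]
          exact hfA i h1 (by omega)
        rcases Nat.eq_or_lt_of_le hj with hj' | hj'
        · -- j = n+1, i ≤ n-1
          have hBf : Bd.filter p = [i] := by
            rw [hp, filter_or_of_not_mem Bd i j hjB]
            exact hfBd i h1 (by omega)
          have e1 : p (n+2) = false := by simp [hp]; omega
          have e2 : p (n+1) = true := by simp [hp]; omega
          have e3 : p n = false := by simp [hp]; omega
          simp only [List.filter, e1, e2, e3, List.filter_nil]
          rw [hAf, hBf]
          simp; omega
        · -- j = n+2, i ≤ n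
          have hj2 : j = n+2 := by omega
          have e1 : p (n+2) = true := by simp [hp]; omega
          have e2 : p (n+1) = false := by simp [hp]; omega
          simp only [List.filter, e1, e2, List.filter_nil]
          rcases Nat.lt_or_ge i n with hi | hi
          · have hBf : Bd.filter p = [i] := by
              rw [hp, filter_or_of_not_mem Bd i j hjB]
              exact hfBd i h1 (by omega)
            have e3 : p n = false := by simp [hp]; omega
            simp only [e3]
            rw [hAf, hBf]
            simp; omega
          · have hin : i = n := by omega
            have hBf : Bd.filter p = [] := by
              rw [hp, filter_or_of_not_mem Bd i j hjB, hin]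
              exact hfBdn
            have e3 : p n = true := by simp [hp]; omega
            simp only [e3]
            rw [hAf, hBf]
            simp; omega

/-- For every even `n ≥ 2` and all `1 ≤ i < j ≤ n` with `j - i ≥ 2`, the projection
`S̄ n[xᵢ,xⱼ]` equals `xᵢ xⱼ xᵢ xⱼ`. -/
theorem sbarW_projections (n : ℕ) (hn : 2 ≤ n) (he : Even n) :
    ∀ i j : ℕ, 1 ≤ i → i < j → j ≤ n → 2 ≤ j - i →
      proj2 (sbarW n) i j = [i, j, i, j] := by
  obtain ⟨k, hk⟩ := he
  have : n = 2*(k-1)+2 := by omega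
  rw [this]
  exact (qkey (k-1)).2.2.2.2.2
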